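/- For a one-dimensional query S with sensitivity Δ, the Gaussian mechanism with standard deviation σ ≥ √(2 ln(1.25/δ)) · Δ / ε is (ε, δ)-differentially private, for any ε ∈ (0, 1) and δ ∈ (0, 1). -/

import Mathlib

open MeasureTheory ProbabilityTheory Set Real NNReal ENNReal

lemma gm_shift (m : ℝ) (v : ℝ≥0) {s : Set ℝ} (hs : MeasurableSet s) :
    gaussianReal m v s = gaussianReal 0 v ((fun z => m + z) ⁻¹' s) := by
  have h : (gaussianReal 0 v).map (m + ·) = gaussianReal m v := by
    rw [gaussianReal_map_const_add, zero_add]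
  rw [← h, Measure.map_apply (by fun_prop) hs]

lemma gm_neg (v : ℝ≥0) (w : ℝ) :
    gaussianReal 0 v (Iio w) = gaussianReal 0 v (Ioi (-w)) := by
  have h : (gaussianReal 0 v).map (((-1 : ℝ)) * ·) = gaussianReal 0 v := by
    rw [gaussianReal_map_const_mul]
    have h1 : (⟨(-1 : ℝ)^2, sq_nonneg _⟩ : ℝ≥0) = 1 := by ext; norm_num
    rw [mul_zero]; congr 1; ext; simp
  conv_lhs => rw [← h]
  rw [Measure.map_apply (by fun_prop) measurableSet_Iio]
  congr 1
  ext z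
  simp only [mem_preimage, mem_Iio, mem_Ioi]
  constructor <;> intro hz <;> nlinarith

lemma gm_half (v : ℝ≥0) : gaussianReal 0 v (Ioi 0) ≤ 1 / 2 := by
  have hsym : gaussianReal 0 v (Iio 0) = gaussianReal 0 v (Ioi 0) := by
    rw [gm_neg v 0, neg_zero]
  have hu : gaussianReal 0 v (Iio 0) + gaussianReal 0 v (Ioi 0) ≤ 1 := by
    rw [← measure_union (Set.Iio_disjoint_Ici le_rfl |>.mono_right Set.Ioi_subset_Ici_self)
      measurableSet_Ioi]
    exact le_trans (measure_mono (subset_univ _)) (by simp)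
  rw [hsym] at hu
  rw [ENNReal.le_div_iff_mul_le (Or.inl two_ne_zero) (Or.inl ENNReal.ofNat_ne_top), mul_two]
  exact hu

lemma gm_half_ofReal : (1/2 : ℝ≥0∞) = ENNReal.ofReal (1/2) := by
  rw [ENNReal.ofReal_div_of_pos two_pos, ENNReal.ofReal_one, ENNReal.ofReal_ofNat]

lemma gm_tail_nonneg (v : ℝ≥0) (hv : v ≠ 0) {q : ℝ} (hq : 0 ≤ q) :
    gaussianReal 0 v (Ioi q) ≤ ENNReal.ofReal (1/2 * Real.exp (-q^2/(2*(v:ℝ)))) := by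
  have hv2 : 0 < (2 : ℝ) * v := by
    have : (0:ℝ) < v := NNReal.coe_pos.mpr (lt_of_le_of_ne (zero_le : (0:ℝ≥0) ≤ v) (Ne.symm hv))
    linarith
  rw [gaussianReal_apply 0 hv]
  calc ∫⁻ x in Ioi q, gaussianPDF 0 v x
      ≤ ∫⁻ x in Ioi q, ENNReal.ofReal (Real.exp (-q^2/(2*(v:ℝ)))) * gaussianPDF q v x := by
        refine setLIntegral_mono ((measurable_gaussianPDF q v).const_mul _) (fun x hx => ?_)
        rw [gaussianPDF, gaussianPDF, ← ENNReal.ofReal_mul (Real.exp_nonneg _)]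
        refine ENNReal.ofReal_le_ofReal ?_
        simp only [gaussianPDFReal]
        have hC : (0:ℝ) ≤ (√(2*π*(v:ℝ)))⁻¹ := by positivity
        have key : rexp (-(x-0)^2/(2*(v:ℝ))) ≤
            rexp (-q^2/(2*(v:ℝ))) * rexp (-(x-q)^2/(2*(v:ℝ))) := by
          rw [← Real.exp_add, Real.exp_le_exp, ← add_div, div_le_div_iff₀ hv2 hv2]
          have hxq : (0:ℝ) ≤ x - q := by
            have : q < x := hx
            linarith
          nlinarith [mul_nonneg hq hxq]
        calc (√(2*π*(v:ℝ)))⁻¹ * rexp (-(x-0)^2/(2*(v:ℝ)))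
            ≤ (√(2*π*(v:ℝ)))⁻¹ * (rexp (-q^2/(2*(v:ℝ))) * rexp (-(x-q)^2/(2*(v:ℝ)))) :=
              mul_le_mul_of_nonneg_left key hC
          _ = rexp (-q^2/(2*(v:ℝ))) * ((√(2*π*(v:ℝ)))⁻¹ * rexp (-(x-q)^2/(2*(v:ℝ)))) := by ring
    _ = ENNReal.ofReal (Real.exp (-q^2/(2*(v:ℝ)))) * gaussianReal q v (Ioi q) := by
        rw [lintegral_const_mul _ (measurable_gaussianPDF q v), ← gaussianReal_apply q hv]
    _ ≤ ENNReal.ofReal (Real.exp (-q^2/(2*(v:ℝ)))) * (1/2) := by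
        gcongr
        rw [gm_shift q v measurableSet_Ioi]
        have hpre : (fun z => q + z) ⁻¹' Ioi q = Ioi 0 := by
          ext z; simp [mem_preimage, mem_Ioi]
        rw [hpre]
        exact gm_half v
    _ = ENNReal.ofReal (1/2 * Real.exp (-q^2/(2*(v:ℝ)))) := by
        rw [gm_half_ofReal, ← ENNReal.ofReal_mul (Real.exp_nonneg _), mul_comm]

lemma gm_tail_neg (v : ℝ≥0) (hv : v ≠ 0) {q : ℝ} (hq : q ≤ 0) :
    gaussianReal 0 v (Ioi q) ≤ ENNReal.ofReal (1/2 + (-q) * (√(2*π*(v:ℝ)))⁻¹) := by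
  have hC : (0:ℝ) ≤ (√(2*π*(v:ℝ)))⁻¹ := by positivity
  rw [← Set.Ioc_union_Ioi_eq_Ioi hq]
  refine le_trans (measure_union_le _ _) ?_
  have b1 : gaussianReal 0 v (Ioc q 0) ≤ ENNReal.ofReal ((-q) * (√(2*π*(v:ℝ)))⁻¹) := by
    rw [gaussianReal_apply 0 hv]
    calc ∫⁻ x in Ioc q 0, gaussianPDF 0 v x
        ≤ ∫⁻ _ in Ioc q 0, ENNReal.ofReal ((√(2*π*(v:ℝ)))⁻¹) := by
          refine setLIntegral_mono measurable_const (fun x _ => ?_)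
          refine ENNReal.ofReal_le_ofReal ?_
          simp only [gaussianPDFReal]
          have : rexp (-(x-0)^2/(2*(v:ℝ))) ≤ 1 := by
            rw [Real.exp_le_one_iff]
            have h1 : (0:ℝ) ≤ (x-0)^2 := sq_nonneg _
            have h2 : (0:ℝ) ≤ 2*(v:ℝ) := by positivity
            exact div_nonpos_iff.mpr (Or.inr ⟨by linarith, h2⟩)
          nlinarith
      _ = ENNReal.ofReal ((√(2*π*(v:ℝ)))⁻¹) * volume (Ioc q 0) := setLIntegral_const _ _
      _ = ENNReal.ofReal ((-q) * (√(2*π*(v:ℝ)))⁻¹) := by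
          rw [Real.volume_Ioc, ← ENNReal.ofReal_mul hC]
          congr 1
          ring
  calc gaussianReal 0 v (Ioc q 0) + gaussianReal 0 v (Ioi 0)
      ≤ ENNReal.ofReal ((-q) * (√(2*π*(v:ℝ)))⁻¹) + 1/2 := add_le_add b1 (gm_half v)
    _ = ENNReal.ofReal (1/2 + (-q) * (√(2*π*(v:ℝ)))⁻¹) := by
        rw [gm_half_ofReal, ← ENNReal.ofReal_add (mul_nonneg (neg_nonneg.2 hq) hC) (by norm_num), add_comm]

lemma gm_thr_neg (E c : ℝ) (hc : c < 0) : -((E - c^2/2)/c) = E/|c| - |c|/2 := by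
  rw [abs_of_neg hc]
  field_simp [hc.ne]
  ring
lemma gm_thr_pos (E c : ℝ) (hc : 0 < c) : (E - c^2/2)/c = E/|c| - |c|/2 := by
  rw [abs_of_pos hc]
  field_simp [hc.ne', hc.ne]

set_option maxHeartbeats 1000000 in
lemma gm_coreA (Δ ε δ σ L u : ℝ) (hΔpos : 0 < Δ) (hε1 : 0 < ε) (hε2 : ε < 1)
    (hδpos : 0 < δ) (hδval : δ = 5/4 * Real.exp (-L))
    (hsq : 2*L*Δ^2 ≤ ε^2*σ^2) (hσpos : 0 < σ) (huΔ : u * Δ = ε * σ^2) :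
    1/2 * Real.exp (-(u - Δ/2)^2 / (2*σ^2)) ≤ δ := by
  have hexphalf : Real.exp ((1:ℝ)/2) ≤ 5/2 := by
    have h1 : Real.exp ((1:ℝ)/2) * Real.exp ((1:ℝ)/2) = Real.exp 1 := by
      rw [← Real.exp_add]; norm_num
    nlinarith [Real.exp_one_lt_d9.le, (Real.exp_pos ((1:ℝ)/2)).le]
  have h7 : u^2 * Δ^2 = (ε^2*σ^2)*σ^2 := by
    have h : (u * Δ)^2 = (ε*σ^2)^2 := by rw [huΔ]
    nlinarith [h]
  have h9 : 2*L*σ^2*Δ^2 ≤ u^2*Δ^2 := by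
    calc 2*L*σ^2*Δ^2 = (2*L*Δ^2)*σ^2 := by ring
      _ ≤ (ε^2*σ^2)*σ^2 := mul_le_mul_of_nonneg_right hsq (sq_nonneg σ)
      _ = u^2*Δ^2 := h7.symm
  have hu2 : 2*L*σ^2 ≤ u^2 := by
    nlinarith [h9, mul_pos hΔpos hΔpos]
  have hεσ2' : ε*σ^2 ≤ σ^2 := by nlinarith [hε2.le, sq_nonneg σ]
  have ht2 : σ^2*(2*L-1) ≤ (u - Δ/2)^2 := by
    nlinarith [hu2, huΔ, hεσ2', sq_nonneg Δ]
  have hfrac : L - 1/2 ≤ (u - Δ/2)^2/(2*σ^2) := by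
    rw [le_div_iff₀ (by positivity : (0:ℝ) < 2*σ^2)]
    nlinarith [ht2]
  have hexp2 : Real.exp (-(u - Δ/2)^2 / (2*σ^2)) ≤ Real.exp ((1:ℝ)/2) * Real.exp (-L) := by
    rw [← Real.exp_add]
    apply Real.exp_le_exp.2
    rw [neg_div]
    linarith [hfrac]
  have h20 : Real.exp ((1:ℝ)/2) * Real.exp (-L) ≤ 5/2 * Real.exp (-L) :=
    mul_le_mul_of_nonneg_right hexphalf (Real.exp_pos _).le
  rw [hδval]
  linarith [hexp2, h20]

set_option maxHeartbeats 1000000 in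
lemma gm_coreB (Δ ε δ σ L u : ℝ) (hΔpos : 0 < Δ) (hε1 : 0 < ε) (hε2 : ε < 1)
    (hδpos : 0 < δ) (hL2 : (1:ℝ)/5 ≤ L) (hδval : δ = 5/4 * Real.exp (-L))
    (hsq : 2*L*Δ^2 ≤ ε^2*σ^2) (hσpos : 0 < σ) (huΔ : u * Δ = ε * σ^2) (hu0 : 0 ≤ u)
    (hnegq : u - Δ/2 < 0) :
    1/2 + (-(u - Δ/2)) * (Real.sqrt (2*π) * σ)⁻¹ ≤ δ := by
  set s := Real.sqrt (2*L) with hsdef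
  have hs2 : s^2 = 2*L := Real.sq_sqrt (by positivity)
  have hspos : 0 < s := Real.sqrt_pos.2 (by positivity)
  have hεσ : s * Δ ≤ ε * σ := by
    have h0 : Real.sqrt (2*L*Δ^2) ≤ Real.sqrt ((ε*σ)^2) := Real.sqrt_le_sqrt (by nlinarith [hsq])
    rwa [Real.sqrt_mul (by positivity : (0:ℝ) ≤ 2*L) (Δ^2), Real.sqrt_sq hΔpos.le,
      Real.sqrt_sq (by positivity : (0:ℝ) ≤ ε*σ), ← hsdef] at h0
  have hsp : (5:ℝ)/2 ≤ Real.sqrt (2*π) := by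
    have h2 : Real.sqrt (2*π)^2 = 2*π := Real.sq_sqrt (by positivity)
    nlinarith [Real.pi_gt_d6, Real.sqrt_nonneg (2*π)]
  have hs06 : (3:ℝ)/5 ≤ s := by nlinarith [hs2, hspos, hL2, sq_nonneg (s - 3/5)]
  have hεσ2 : ε * σ^2 < Δ^2/2 := by
    nlinarith [hnegq, huΔ, hΔpos]
  have hL4 : L < 1/4 := by
    have h12 : ε^2*σ^2 < ε*(Δ^2/2) := by nlinarith [hεσ2, hε1]
    have h13 : ε*(Δ^2/2) ≤ Δ^2/2 := by nlinarith [hε2.le, sq_nonneg Δ]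
    nlinarith [hsq, h12, h13, mul_pos hΔpos hΔpos]
  have hδge : (15:ℝ)/16 ≤ δ := by
    have h3 : Real.exp (-(1/4:ℝ)) ≤ Real.exp (-L) := Real.exp_le_exp.2 (by linarith)
    have h4 : (3/4:ℝ) ≤ Real.exp (-(1/4:ℝ)) := by nlinarith [Real.add_one_le_exp (-(1/4):ℝ)]
    rw [hδval]
    linarith [h3, h4]
  have ht1n : (0:ℝ) ≤ -(u - Δ/2) := by linarith
  have h6 : -(u - Δ/2) ≤ Δ/2 := by linarith
  have hb1 : 2*s*(-(u - Δ/2)) ≤ σ := by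
    nlinarith [mul_le_mul_of_nonneg_left h6 (by positivity : (0:ℝ) ≤ 2*s),
      hεσ, hε2.le, hσpos.le, hspos.le]
  have hkey : (-(u - Δ/2)) * (Real.sqrt (2*π) * σ)⁻¹ ≤ 1/3 := by
    rw [← div_eq_mul_inv, div_le_iff₀ (by positivity)]
    nlinarith [hb1, hs06, hsp, hσpos.le, ht1n,
      mul_nonneg ht1n (by linarith : (0:ℝ) ≤ 2*s - 6/5),
      mul_nonneg (by linarith : (0:ℝ) ≤ Real.sqrt (2*π) - 5/2) hσpos.le]
  linarith [hkey, hδge]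

set_option maxHeartbeats 1000000 in
/-- The one-dimensional Gaussian mechanism with `σ ≥ √(2 ln(1.25/δ)) · Δ / ε` is
`(ε, δ)`-differentially private for `ε, δ ∈ (0, 1)`, for a query of sensitivity `Δ`. -/
theorem gaussian_mechanism_DP {D : Type*} (neighbor : D → D → Prop) (S : D → ℝ)
    (Δ ε δ σ : ℝ) (hΔ : 0 ≤ Δ)
    (hsens : ∀ x y, neighbor x y → |S x - S y| ≤ Δ)
    (hε : ε ∈ Set.Ioo (0 : ℝ) 1) (hδ : δ ∈ Set.Ioo (0 : ℝ) 1)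
    (hσ : Real.sqrt (2 * Real.log (1.25 / δ)) * Δ / ε ≤ σ) :
    ∀ x y, neighbor x y → ∀ T : Set ℝ, MeasurableSet T →
      Measure.map (fun z => S x + z) (gaussianReal 0 ((σ ^ 2).toNNReal)) T
        ≤ ENNReal.ofReal (Real.exp ε) *
            Measure.map (fun z => S y + z) (gaussianReal 0 ((σ ^ 2).toNNReal)) T
          + ENNReal.ofReal δ := by
  intro x y hxy T hT
  by_cases hΔ0 : Δ = 0
  · have hxy' : S x = S y := by
      have h := hsens x y hxy
      rw [hΔ0] at h
      have h2 := abs_nonneg (S x - S y)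
      have h3 : S x - S y = 0 := abs_eq_zero.mp (le_antisymm h h2)
      linarith
    rw [hxy']
    refine le_trans ?_ le_self_add
    refine le_mul_of_one_le_left zero_le ?_
    rw [← ENNReal.ofReal_one]
    exact ENNReal.ofReal_le_ofReal (by nlinarith [Real.add_one_le_exp ε, hε.1])
  · have hΔpos : 0 < Δ := lt_of_le_of_ne hΔ (Ne.symm hΔ0)
    have hδpos := hδ.1
    have h125 : (1:ℝ) < 1.25 / δ := by
      rw [lt_div_iff₀ hδpos]; nlinarith [hδ.2]
    set L := Real.log (1.25 / δ) with hLdef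
    have hL : 0 < L := Real.log_pos h125
    have hexpL : Real.exp (-L) = δ / 1.25 := by
      rw [Real.exp_neg, hLdef, Real.exp_log (by positivity), inv_div]
    have hδval : δ = 5/4 * Real.exp (-L) := by rw [hexpL]; ring
    have hL2 : (1:ℝ)/5 ≤ L := by
      have hmo : Real.log 1.25 ≤ L := by
        rw [hLdef]
        apply Real.log_le_log (by norm_num)
        rw [le_div_iff₀ hδpos]; nlinarith [hδ.2]
      have h08 : Real.log (4/5) ≤ -(1/5) := by
        have := Real.log_le_sub_one_of_pos (show (0:ℝ) < 4/5 by norm_num)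
        linarith
      have h09 : Real.log 1.25 = - Real.log (4/5) := by
        rw [← Real.log_inv]
        norm_num
      linarith
    set s := Real.sqrt (2 * L) with hsdef
    have hs2 : s ^ 2 = 2 * L := Real.sq_sqrt (by positivity)
    have hspos : 0 < s := Real.sqrt_pos.2 (by positivity)
    have hσpos : 0 < σ :=
      lt_of_lt_of_le (div_pos (mul_pos hspos hΔpos) hε.1) hσ
    have hεσ : s * Δ ≤ ε * σ := by
      rw [div_le_iff₀ hε.1] at hσ
      linarith [hσ]
    have hsq : s ^ 2 * Δ ^ 2 ≤ ε ^ 2 * σ ^ 2 := by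
      nlinarith [hεσ, mul_pos hspos hΔpos, mul_pos hε.1 hσpos]
    have hsq' : 2*L*Δ^2 ≤ ε^2*σ^2 := by nlinarith [hsq, hs2]
    have hVc : (((σ^2).toNNReal : ℝ≥0) : ℝ) = σ^2 := Real.coe_toNNReal _ (sq_nonneg σ)
    set v : ℝ≥0 := (σ^2).toNNReal with hvdef
    have hv0 : v ≠ 0 := by
      intro h
      rw [h] at hVc
      simp at hVc
      nlinarith [hVc]
    set a := S x with hadef
    set b := S y with hbdef
    set c := a - b with hcdef
    have hcle : |c| ≤ Δ := hsens x y hxy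
    set K := ε * σ^2 - c^2/2 with hKdef
    set G := {t : ℝ | c * (t - a) ≤ K} with hGdef
    have hGm : MeasurableSet G := measurableSet_le (by fun_prop) measurable_const
    have hmapa : Measure.map (fun z => a + z) (gaussianReal 0 v) = gaussianReal a v := by
      rw [gaussianReal_map_const_add, zero_add]
    have hmapb : Measure.map (fun z => b + z) (gaussianReal 0 v) = gaussianReal b v := by
      rw [gaussianReal_map_const_add, zero_add]
    rw [hmapa, hmapb]
    -- core tail estimate
    have hcoreAux : ∀ u : ℝ, u * Δ = ε * σ^2 → 0 ≤ u →
        gaussianReal 0 v (Ioi (u - Δ/2)) ≤ ENNReal.ofReal δ := by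
      intro u huΔ hu0
      rcases le_or_gt 0 (u - Δ/2) with hposq | hnegq
      · refine le_trans (gm_tail_nonneg v hv0 hposq) (ENNReal.ofReal_le_ofReal ?_)
        rw [hVc]
        exact gm_coreA Δ ε δ σ L u hΔpos hε.1 hε.2 hδpos hδval hsq' hσpos huΔ
      · refine le_trans (gm_tail_neg v hv0 hnegq.le) (ENNReal.ofReal_le_ofReal ?_)
        rw [hVc, Real.sqrt_mul (by positivity : (0:ℝ) ≤ 2*π) (σ^2), Real.sqrt_sq hσpos.le]
        exact gm_coreB Δ ε δ σ L u hΔpos hε.1 hε.2 hδpos hL2 hδval hsq' hσpos huΔ hu0 hnegq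
    have hcore : gaussianReal 0 v (Ioi (ε*σ^2/Δ - Δ/2)) ≤ ENNReal.ofReal δ :=
      hcoreAux (ε*σ^2/Δ) (div_mul_cancel₀ _ hΔpos.ne')
        (div_nonneg (mul_nonneg hε.1.le (sq_nonneg σ)) hΔpos.le)
    -- bad event bound
    have part2 : gaussianReal a v Gᶜ ≤ ENNReal.ofReal δ := by
      rw [gm_shift a v hGm.compl]
      have hpre : (fun z => a + z) ⁻¹' Gᶜ = {z : ℝ | K < c * z} := by
        ext z
        simp only [Set.mem_preimage, Set.mem_compl_iff, hGdef, Set.mem_setOf_eq, not_le,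
          add_sub_cancel_left]
      rw [hpre]
      by_cases hc0 : c = 0
      · have hem : {z : ℝ | K < c * z} = ∅ := by
          ext z
          simp only [Set.mem_setOf_eq, Set.mem_empty_iff_false, iff_false, not_lt, hc0, zero_mul]
          rw [hKdef, hc0]
          nlinarith [mul_nonneg hε.1.le (sq_nonneg σ)]
        rw [hem]
        simp
      · have habs : 0 < |c| := abs_pos.2 hc0
        have hqt : gaussianReal 0 v {z : ℝ | K < c * z}
            = gaussianReal 0 v (Ioi (ε*σ^2/|c| - |c|/2)) := by
          rcases lt_or_gt_of_ne hc0 with hcneg | hcpos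
          · have h1 : {z : ℝ | K < c * z} = Iio (K / c) := by
              ext z
              simp only [Set.mem_setOf_eq, Set.mem_Iio]
              rw [lt_div_iff_of_neg hcneg, mul_comm]
            have h2 : -(K/c) = ε*σ^2/|c| - |c|/2 := by
              rw [hKdef]; exact gm_thr_neg _ _ hcneg
            rw [h1, gm_neg, h2]
          · have h1 : {z : ℝ | K < c * z} = Ioi (K / c) := by
              ext z
              simp only [Set.mem_setOf_eq, Set.mem_Ioi]
              rw [div_lt_iff₀ hcpos, mul_comm]
            have h2 : K/c = ε*σ^2/|c| - |c|/2 := by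
              rw [hKdef]; exact gm_thr_pos _ _ hcpos
            rw [h1, h2]
        rw [hqt]
        refine le_trans (measure_mono (Set.Ioi_subset_Ioi ?_)) hcore
        have h2 : ε*σ^2/Δ ≤ ε*σ^2/|c| :=
          div_le_div_of_nonneg_left (mul_nonneg hε.1.le (sq_nonneg σ)) habs hcle
        linarith [hcle]
    -- good event bound
    have hpdf : ∀ t ∈ T ∩ G, gaussianPDF a v t ≤ ENNReal.ofReal (Real.exp ε) * gaussianPDF b v t := by
      intro t ht
      rw [gaussianPDF, gaussianPDF, ← ENNReal.ofReal_mul (Real.exp_nonneg _)]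
      refine ENNReal.ofReal_le_ofReal ?_
      simp only [gaussianPDFReal]
      rw [hVc]
      have htG : c * (t - a) ≤ K := ht.2
      have hC : (0:ℝ) ≤ (√(2*π*σ^2))⁻¹ := by positivity
      have key : rexp (-(t-a)^2/(2*σ^2)) ≤ rexp ε * rexp (-(t-b)^2/(2*σ^2)) := by
        rw [← Real.exp_add, Real.exp_le_exp]
        have hexp : (t - b)^2 = (t-a)^2 + 2*c*(t-a) + c^2 := by rw [hcdef]; ring
        have h2σ : (0:ℝ) < 2*σ^2 := by positivity
        have htK : c*(t-a) ≤ ε*σ^2 - c^2/2 := by rw [← hKdef]; exact htG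
        have hdiv : (t-b)^2/(2*σ^2) - (t-a)^2/(2*σ^2) ≤ ε := by
          rw [div_sub_div_same, div_le_iff₀ h2σ]
          nlinarith [htK, hexp]
        rw [neg_div, neg_div]
        linarith [hdiv]
      calc (√(2*π*σ^2))⁻¹ * rexp (-(t-a)^2/(2*σ^2))
          ≤ (√(2*π*σ^2))⁻¹ * (rexp ε * rexp (-(t-b)^2/(2*σ^2))) :=
            mul_le_mul_of_nonneg_left key hC
        _ = rexp ε * ((√(2*π*σ^2))⁻¹ * rexp (-(t-b)^2/(2*σ^2))) := by ring
    have part1 : gaussianReal a v (T ∩ G) ≤ ENNReal.ofReal (Real.exp ε) * gaussianReal b v T := by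
      rw [gaussianReal_apply a hv0, gaussianReal_apply b hv0]
      calc ∫⁻ t in T ∩ G, gaussianPDF a v t
          ≤ ∫⁻ t in T ∩ G, ENNReal.ofReal (Real.exp ε) * gaussianPDF b v t :=
            setLIntegral_mono ((measurable_gaussianPDF b v).const_mul _) hpdf
        _ = ENNReal.ofReal (Real.exp ε) * ∫⁻ t in T ∩ G, gaussianPDF b v t :=
            lintegral_const_mul _ (measurable_gaussianPDF b v)
        _ ≤ ENNReal.ofReal (Real.exp ε) * ∫⁻ t in T, gaussianPDF b v t := by
            gcongr
            exact Set.inter_subset_left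
    calc gaussianReal a v T ≤ gaussianReal a v ((T ∩ G) ∪ Gᶜ) :=
          measure_mono (fun t ht => by
            by_cases h : t ∈ G
            exacts [Or.inl ⟨ht, h⟩, Or.inr h])
      _ ≤ gaussianReal a v (T ∩ G) + gaussianReal a v Gᶜ := measure_union_le _ _
      _ ≤ ENNReal.ofReal (Real.exp ε) * gaussianReal b v T + ENNReal.ofReal δ :=
          add_le_add part1 part2
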